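/- For integers D ≥ 0 and 1 ≤ M ≤ M', and any s ≥ D, the averaged staleness (1/M)∑_{j=0}^{M−1}(s − ⌊(Ms + j − D)/M⌋) is at least (1/M')∑_{j=0}^{M'−1}(s − ⌊(M's + j − D)/M'⌋); that is, the averaged level of staleness is non-increasing in the accumulation step M. -/
import Mathlib


lemma aux_sum_ediv (M : ℕ) (hM : 1 ≤ M) (D : ℤ) (hD : 0 ≤ D) :
    ∑ j ∈ Finset.range M, (((j : ℤ) - D) / (M : ℤ)) = -D := by
  obtain ⟨m, rfl⟩ : ∃ m, M = m + 1 := ⟨M - 1, by omega⟩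
  obtain ⟨d, rfl⟩ := Int.eq_ofNat_of_zero_le hD
  induction d with
  | zero =>
    simp only [Nat.cast_zero, sub_zero, neg_zero]
    apply Finset.sum_eq_zero
    intro j hj
    exact Int.ediv_eq_zero_of_lt (by positivity)
      (by exact_mod_cast Finset.mem_range.mp hj)
  | succ d ih =>
    have h1 : ∀ j : ℕ, ((((j+1):ℕ):ℤ) - ((d:ℤ)+1)) = ((j:ℤ) - (d:ℤ)) := by
      intro j; push_cast; ring
    have h1' : ∀ j : ℕ, ((((j+1):ℕ):ℤ) - (d:ℤ)) = ((j:ℤ) + 1 - (d:ℤ)) := by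
      intro j; push_cast; ring
    have hcast : ((d+1 : ℕ) : ℤ) = (d:ℤ) + 1 := by push_cast; ring
    specialize ih (by positivity)
    rw [hcast]
    rw [Finset.sum_range_succ']
    simp only [h1]
    rw [Finset.sum_range_succ] at ih
    have h2 : (((0:ℕ):ℤ) - ((d:ℤ)+1)) / ((m+1:ℕ):ℤ) = ((m:ℤ) - (d:ℤ)) / ((m+1:ℕ):ℤ) - 1 := by
      have h3 : (((0:ℕ):ℤ) - ((d:ℤ)+1)) = ((m:ℤ) - (d:ℤ)) + ((m+1:ℕ):ℤ) * (-1) := by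
        push_cast; ring
      rw [h3, Int.add_mul_ediv_left _ _ (by positivity)]
      ring
    linarith

lemma aux_sum_eq (D s : ℤ) (M : ℕ) (hM : 1 ≤ M) (hD : 0 ≤ D) :
    ∑ j ∈ Finset.range M, ((s : ℚ) - ⌊((M : ℚ) * s + j - D) / M⌋) = (D : ℚ) := by
  have hM0 : (0:ℤ) < (M:ℤ) := by exact_mod_cast hM
  have key : ∀ j : ℕ, ((s : ℚ) - ⌊((M : ℚ) * s + j - D) / M⌋)
      = -((((j:ℤ) - D) / (M:ℤ) : ℤ) : ℚ) := by
    intro j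
    have e1 : ((M : ℚ) * s + j - D) / M = ((((M:ℤ) * s + j - D : ℤ) : ℚ)) / ((M:ℕ) : ℚ) := by
      push_cast; ring
    rw [e1, Rat.floor_intCast_div_natCast]
    have e2 : ((M:ℤ) * s + (j:ℤ) - D) / (M:ℤ) = ((j:ℤ) - D) / (M:ℤ) + s := by
      have : (M:ℤ) * s + (j:ℤ) - D = ((j:ℤ) - D) + (M:ℤ) * s := by ring
      rw [this, Int.add_mul_ediv_left _ _ (ne_of_gt hM0)]
    rw [e2]
    push_cast
    ring
  simp only [key]
  rw [Finset.sum_neg_distrib, ← Int.cast_sum, aux_sum_ediv M hM D hD]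
  push_cast; ring

/-- For integers `D ≥ 0`, `1 ≤ M ≤ M'`, and any `s ≥ D`, the averaged level of
staleness `(1/M)∑_{j=0}^{M−1}(s − ⌊(Ms + j − D)/M⌋)` is non-increasing in the
accumulation step `M`. -/
theorem stmt_4 (D s : ℤ) (M M' : ℕ) (hD : 0 ≤ D) (hM : 1 ≤ M) (hMM' : M ≤ M')
    (hs : D ≤ s) :
    (1 / (M' : ℚ)) * ∑ j ∈ Finset.range M',
        ((s : ℚ) - ⌊((M' : ℚ) * s + j - D) / M'⌋) ≤
      (1 / (M : ℚ)) * ∑ j ∈ Finset.range M,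
        ((s : ℚ) - ⌊((M : ℚ) * s + j - D) / M⌋) := by
  have hM' : 1 ≤ M' := le_trans hM hMM'
  rw [aux_sum_eq D s M hM hD, aux_sum_eq D s M' hM' hD]
  rw [one_div_mul_eq_div, one_div_mul_eq_div]
  exact div_le_div_of_nonneg_left (by exact_mod_cast hD) (by positivity) (by exact_mod_cast hMM')
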